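/- Let A = {a₁, a₂, …, a_k} be a set of positive integers with gcd 1 and a₁ = min A. With m_i the least element of the numerical semigroup generated by A congruent to i modulo a₁ (for 1 ≤ i ≤ a₁-1), the sum of all positive integers not representable by A equals (1/(2a₁))·Σ_{i=1}^{a₁-1} m_i² − (1/2)·Σ_{i=1}^{a₁-1} m_i + (a₁²−1)/12. -/

import Mathlib

lemma sum_range_cast (q : ℕ) : ∑ t ∈ Finset.range q, (t : ℚ) = q * (q - 1) / 2 := by
  induction q with
  | zero => simp
  | succ n ih => rw [Finset.sum_range_succ, ih]; push_cast; ring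

lemma sum_range_sq_cast (q : ℕ) :
    ∑ t ∈ Finset.range q, (t : ℚ) ^ 2 = q * (q - 1) * (2 * q - 1) / 6 := by
  induction q with
  | zero => simp
  | succ n ih => rw [Finset.sum_range_succ, ih]; push_cast; ring

theorem stmt5 (A : Finset ℕ) (hA : A.Nonempty) (hpos : ∀ x ∈ A, 0 < x)
    (hgcd : A.gcd id = 1) (a1 : ℕ) (ha1 : a1 = A.min' hA)
    (m : ℕ → ℕ)
    (hm : ∀ i, 1 ≤ i → i ≤ a1 - 1 →
      IsLeast {n : ℕ | 0 < n ∧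
        n ∈ AddSubmonoid.closure (A : Set ℕ) ∧ n % a1 = i} (m i)) :
    (∑ᶠ n ∈ {n : ℕ | 0 < n ∧ n ∉ AddSubmonoid.closure (A : Set ℕ)}, (n : ℚ))
      = (∑ i ∈ Finset.Icc 1 (a1 - 1), (m i : ℚ) ^ 2) / (2 * a1)
        - (∑ i ∈ Finset.Icc 1 (a1 - 1), (m i : ℚ)) / 2 + ((a1 : ℚ) ^ 2 - 1) / 12 := by
  classical
  set S := AddSubmonoid.closure (A : Set ℕ) with hSdef
  have haA : a1 ∈ A := ha1 ▸ A.min'_mem hA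
  have hapos : 0 < a1 := hpos _ haA
  have haS : a1 ∈ S := AddSubmonoid.subset_closure (by exact_mod_cast haA)
  have hmulS : ∀ k, k * a1 ∈ S := fun k => by
    simpa [smul_eq_mul] using S.nsmul_mem haS k
  rcases eq_or_lt_of_le (show 1 ≤ a1 from hapos) with h1 | h2
  · -- a1 = 1
    have hall : ∀ n : ℕ, n ∈ S := fun n => by simpa [← h1] using hmulS n
    have hempty : {n : ℕ | 0 < n ∧ n ∉ S} = (∅ : Set ℕ) := by
      ext n; simp [hall n]
    rw [hempty, finsum_mem_empty, ← h1]
    norm_num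
  -- main case: 2 ≤ a1
  -- key membership characterization
  have key : ∀ n : ℕ, 1 ≤ n % a1 → (n ∈ S ↔ m (n % a1) ≤ n) := by
    intro n hn
    have hia : n % a1 < a1 := Nat.mod_lt _ hapos
    have hi2 : n % a1 ≤ a1 - 1 := by omega
    constructor
    · intro hnS
      refine (hm _ hn hi2).2 ⟨?_, hnS, rfl⟩
      rcases Nat.eq_zero_or_pos n with h | h
      · simp [h] at hn
      · exact h
    · intro hle
      obtain ⟨h0, hS', hmod⟩ := (hm _ hn hi2).1
      have hdvd : a1 ∣ n - m (n % a1) :=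
        (Nat.modEq_iff_dvd' hle).mp (show m (n % a1) % a1 = n % a1 from hmod)
      obtain ⟨k, hk⟩ := hdvd
      have hn' : n = m (n % a1) + k * a1 := by
        rw [mul_comm] at hk; omega
      rw [hn']
      exact S.add_mem hS' (hmulS k)
  -- m i decomposition
  set Q : ℕ → ℕ := fun i => (m i - i) / a1 with hQdef
  have hmi : ∀ i, 1 ≤ i → i ≤ a1 - 1 → m i = i + a1 * Q i := by
    intro i h1' h2'
    obtain ⟨h0, hS', hmod⟩ := (hm i h1' h2').1
    have hile : i ≤ m i := le_trans (le_of_eq hmod.symm) (Nat.mod_le _ _)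
    have hdvd : a1 ∣ m i - i := by
      refine (Nat.modEq_iff_dvd' hile).mp ?_
      show i % a1 = m i % a1
      rw [hmod, Nat.mod_eq_of_lt (by omega)]
    have := Nat.mul_div_cancel' hdvd
    simp only [hQdef]
    omega
  -- the gap finset
  set F : Finset ℕ := (Finset.Icc 1 (a1 - 1)).biUnion
      (fun i => (Finset.range (m i)).filter (fun n => n % a1 = i)) with hFdef
  have hset : {n : ℕ | 0 < n ∧ n ∉ S} = (F : Set ℕ) := by
    ext n
    simp only [Set.mem_setOf_eq, Finset.coe_biUnion, Set.mem_iUnion, Finset.mem_coe,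
      Finset.mem_filter, Finset.mem_range, Finset.mem_Icc, hFdef, Finset.mem_biUnion]
    rcases Nat.eq_zero_or_pos (n % a1) with h0 | hp
    · have hnS : n ∈ S := by
        rw [← Nat.div_mul_cancel (Nat.dvd_of_mod_eq_zero h0)]
        exact hmulS _
      constructor
      · rintro ⟨-, hns⟩; exact absurd hnS hns
      · rintro ⟨i, ⟨hi1, -⟩, -, hmod⟩; omega
    · have hn0 : 0 < n := by
        rcases Nat.eq_zero_or_pos n with h | h
        · simp [h] at hp
        · exact h
      constructor
      · rintro ⟨-, hns⟩
        refine ⟨n % a1, ⟨hp, by have := Nat.mod_lt n hapos; omega⟩, ?_, rfl⟩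
        by_contra hle
        exact hns ((key n hp).mpr (by omega))
      · rintro ⟨i, ⟨hi1, hi2⟩, hlt, hmod⟩
        refine ⟨hn0, fun hns => ?_⟩
        have := (key n (by omega : 1 ≤ n % a1)).mp hns
        rw [hmod] at this
        omega
  rw [hset, finsum_mem_coe_finset, hFdef]
  -- disjointness and biUnion sum
  have hdisj : (↑(Finset.Icc 1 (a1 - 1)) : Set ℕ).PairwiseDisjoint
      (fun i => (Finset.range (m i)).filter (fun n => n % a1 = i)) := by
    intro i hi j hj hij
    simp only [Finset.disjoint_left, Finset.mem_filter, Finset.mem_range]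
    rintro x ⟨-, hx⟩ ⟨-, hy⟩
    exact hij (hx ▸ hy)
  rw [Finset.sum_biUnion hdisj]
  -- class sums
  have hclass : ∀ i ∈ Finset.Icc 1 (a1 - 1),
      ∑ n ∈ (Finset.range (m i)).filter (fun n => n % a1 = i), (n : ℚ)
        = (m i : ℚ) ^ 2 / (2 * a1) - (m i : ℚ) / 2 + (i : ℚ) / 2 - (i : ℚ) ^ 2 / (2 * a1) := by
    intro i hi
    rw [Finset.mem_Icc] at hi
    obtain ⟨hi1, hi2⟩ := hi
    have hia : i < a1 := by omega
    have him : m i = i + a1 * Q i := hmi i hi1 hi2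
    have heq : (Finset.range (m i)).filter (fun n => n % a1 = i)
        = (Finset.range (Q i)).image (fun t => i + a1 * t) := by
      ext n
      simp only [Finset.mem_filter, Finset.mem_range, Finset.mem_image]
      constructor
      · rintro ⟨hlt, hmod⟩
        refine ⟨n / a1, ?_, ?_⟩
        · have hd := Nat.div_add_mod n a1
          rw [him] at hlt
          have : a1 * (n / a1) < a1 * Q i := by omega
          exact Nat.lt_of_mul_lt_mul_left this
        · have hd := Nat.div_add_mod n a1
          omega
      · rintro ⟨t, ht, rfl⟩
        refine ⟨by rw [him]; exact Nat.add_lt_add_left ((Nat.mul_lt_mul_left hapos).mpr ht) i, ?_⟩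
        simp [Nat.add_mul_mod_self_left, Nat.mod_eq_of_lt hia]
    rw [heq, Finset.sum_image (by intro a _ b _ h; simp only at h; exact Nat.eq_of_mul_eq_mul_left hapos (by omega))]
    have : ∑ t ∈ Finset.range (Q i), ((i + a1 * t : ℕ) : ℚ)
        = (Q i : ℚ) * i + a1 * (∑ t ∈ Finset.range (Q i), (t : ℚ)) := by
      push_cast
      rw [Finset.sum_add_distrib, Finset.mul_sum]
      simp [mul_comm]
    rw [this, sum_range_cast]
    have hm' : (m i : ℚ) = i + a1 * Q i := by rw [him]; push_cast; ring
    rw [hm']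
    have ha1Q : (a1 : ℚ) ≠ 0 := Nat.cast_ne_zero.mpr (by omega)
    field_simp
    ring
  rw [Finset.sum_congr rfl hclass]
  -- split the sum and finish
  have hsum1 : ∑ i ∈ Finset.Icc 1 (a1 - 1), (i : ℚ) = a1 * (a1 - 1) / 2 := by
    have hr : Finset.range a1 = insert 0 (Finset.Icc 1 (a1 - 1)) := by
      ext x; simp [Finset.mem_range, Finset.mem_Icc]; omega
    have := sum_range_cast a1
    rw [hr, Finset.sum_insert (by simp)] at this
    simpa using this
  have hsum2 : ∑ i ∈ Finset.Icc 1 (a1 - 1), (i : ℚ) ^ 2 = a1 * (a1 - 1) * (2 * a1 - 1) / 6 := by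
    have hr : Finset.range a1 = insert 0 (Finset.Icc 1 (a1 - 1)) := by
      ext x; simp [Finset.mem_range, Finset.mem_Icc]; omega
    have := sum_range_sq_cast a1
    rw [hr, Finset.sum_insert (by simp)] at this
    simpa using this
  have ha1Q : (a1 : ℚ) ≠ 0 := Nat.cast_ne_zero.mpr (by omega)
  simp only [Finset.sum_add_distrib, Finset.sum_sub_distrib, ← Finset.sum_div]
  rw [hsum1, hsum2]
  field_simp
  ring
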